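/- The algorithm computing minRevBits_k(r_1, r_2) = min revBits_k([r_1, r_2]) by descending the binary search tree is correct: starting from x = 0 (representing the implicit root 2^{k−1} after the first move), with step s halved each iteration, moving right (x ← x + s) when x < r_1 and left (x ← x − s) when x > r_2, terminates with some x ∈ [r_1, r_2] satisfying revBits_k(x) = min{revBits_k(y) : r_1 ≤ y ≤ r_2}. -/

import Mathlib

/-- The `k`-bit reversal permutation of `{0,…,2^k−1}`. -/
def revBits (k x : ℕ) : ℕ := ∑ i ∈ Finset.range k, 2 ^ i * (x / 2 ^ (k - 1 - i) % 2)

/-- The loop of the `minRevBits` algorithm: while `x ∉ [r₁, r₂]`, move right (`x ← x + s`)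
if `x < r₁` and left (`x ← x − s`) if `x > r₂`, halving the step `s` each iteration. -/
def mrbLoop (r1 r2 : ℕ) (x s : ℕ) : ℕ :=
  if r1 ≤ x ∧ x ≤ r2 then x
  else if s = 0 then x
  else if x < r1 then mrbLoop r1 r2 (x + s) (s / 2)
  else mrbLoop r1 r2 (x - s) (s / 2)
termination_by s
decreasing_by all_goals omega

lemma sum_two_pow (n : ℕ) : ∑ i ∈ Finset.range n, 2 ^ i = 2 ^ n - 1 := by
  induction n with
  | zero => simp
  | succ n ih =>
    rw [Finset.sum_range_succ, ih]
    have : 1 ≤ 2 ^ n := Nat.one_le_two_pow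
    rw [pow_succ]; omega

lemma revBits_lt (k j x : ℕ) (hj : j ≤ k) (hx : 2 ^ j ∣ x) : revBits k x < 2 ^ (k - j) := by
  obtain ⟨m, rfl⟩ := hx
  have h1 : revBits k (2 ^ j * m)
      = ∑ i ∈ Finset.range (k - j), 2 ^ i * (2 ^ j * m / 2 ^ (k - 1 - i) % 2) := by
    rw [revBits]
    refine (Finset.sum_subset (Finset.range_subset_range.2 (by omega)) ?_).symm
    intro i hi hni
    simp only [Finset.mem_range] at hi hni
    have hb : k - 1 - i < j := by omega
    have hsplit : (2 : ℕ) ^ j = 2 ^ (k - 1 - i) * 2 ^ (j - (k - 1 - i)) := by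
      rw [← pow_add]; congr 1; omega
    have hdiv : 2 ^ j * m / 2 ^ (k - 1 - i) = 2 ^ (j - (k - 1 - i)) * m := by
      rw [hsplit, mul_assoc, Nat.mul_div_cancel_left _ (pow_pos two_pos _)]
    obtain ⟨t, ht⟩ : 2 ∣ 2 ^ (j - (k - 1 - i)) * m :=
      Dvd.dvd.mul_right (dvd_pow_self 2 (by omega)) m
    rw [hdiv, ht, Nat.mul_mod_right, mul_zero]
  have h2 : ∑ i ∈ Finset.range (k - j), 2 ^ i * (2 ^ j * m / 2 ^ (k - 1 - i) % 2)
      ≤ ∑ i ∈ Finset.range (k - j), 2 ^ i := by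
    apply Finset.sum_le_sum
    intro i _
    have : 2 ^ j * m / 2 ^ (k - 1 - i) % 2 ≤ 1 := by omega
    calc 2 ^ i * (2 ^ j * m / 2 ^ (k - 1 - i) % 2) ≤ 2 ^ i * 1 :=
          Nat.mul_le_mul_left _ this
      _ = 2 ^ i := mul_one _
  have h3 : (1 : ℕ) ≤ 2 ^ (k - j) := Nat.one_le_two_pow
  rw [h1]
  rw [sum_two_pow] at h2
  omega

lemma exists_bit (j y : ℕ) (h : y % 2 ^ j ≠ 0) : ∃ i, i < j ∧ y / 2 ^ i % 2 = 1 := by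
  induction j with
  | zero => exact absurd (Nat.mod_one y) h
  | succ j ih =>
    by_cases h' : y % 2 ^ j = 0
    · obtain ⟨m, rfl⟩ := Nat.dvd_of_mod_eq_zero h'
      refine ⟨j, Nat.lt_succ_self j, ?_⟩
      rw [Nat.mul_div_cancel_left _ (pow_pos two_pos _)]
      rw [pow_succ, Nat.mul_mod_mul_left] at h
      rcases Nat.mod_two_eq_zero_or_one m with hm | hm
      · rw [hm, mul_zero] at h; exact absurd rfl h
      · exact hm
    · obtain ⟨i, hi, hbit⟩ := ih h'
      exact ⟨i, by omega, hbit⟩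

lemma revBits_ge (k j y : ℕ) (hj : j ≤ k) (hy : y % 2 ^ j ≠ 0) : 2 ^ (k - j) ≤ revBits k y := by
  obtain ⟨i0, hi0, hbit⟩ := exists_bit j y hy
  have hj1 : 1 ≤ j := by omega
  have hmem : k - 1 - i0 ∈ Finset.range k := Finset.mem_range.2 (by omega)
  have hidx : k - 1 - (k - 1 - i0) = i0 := by omega
  have hterm : 2 ^ (k - 1 - i0) * (y / 2 ^ (k - 1 - (k - 1 - i0)) % 2) = 2 ^ (k - 1 - i0) := by
    rw [hidx, hbit, mul_one]
  calc 2 ^ (k - j) ≤ 2 ^ (k - 1 - i0) := Nat.pow_le_pow_right two_pos (by omega)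
    _ = 2 ^ (k - 1 - i0) * (y / 2 ^ (k - 1 - (k - 1 - i0)) % 2) := hterm.symm
    _ ≤ revBits k y := by
        rw [revBits]
        exact Finset.single_le_sum
          (f := fun i => 2 ^ i * (y / 2 ^ (k - 1 - i) % 2)) (fun i _ => Nat.zero_le _) hmem

lemma keyAux (k j x r1 r2 : ℕ) (h1 : r1 ≤ x) (h2 : x ≤ r2)
    (hd : 2 ^ j ∣ x) (hb1 : r2 < x + 2 ^ j) (hb2 : x < r1 + 2 ^ j) (hjk : j ≤ k) :
    revBits k x = sInf (revBits k '' Set.Icc r1 r2) := by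
  have hxmem : revBits k x ∈ revBits k '' Set.Icc r1 r2 := ⟨x, ⟨h1, h2⟩, rfl⟩
  apply le_antisymm
  · apply le_csInf ⟨_, hxmem⟩
    rintro b ⟨y, ⟨hy1, hy2⟩, rfl⟩
    by_cases hxy : y = x
    · subst hxy; exact le_refl _
    have hy : y % 2 ^ j ≠ 0 := by
      intro h0
      apply hxy
      obtain ⟨a, ha⟩ := hd
      obtain ⟨b, hb⟩ := Nat.dvd_of_mod_eq_zero h0
      have hp : 0 < 2 ^ j := pow_pos two_pos _
      have e1 : y < x + 2 ^ j := by omega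
      have e2 : x < y + 2 ^ j := by omega
      rw [ha, hb] at e1 e2
      have : b < a + 1 := by
        have : 2 ^ j * b < 2 ^ j * (a + 1) := by rw [Nat.mul_add, mul_one]; omega
        exact Nat.lt_of_mul_lt_mul_left this
      have : a < b + 1 := by
        have : 2 ^ j * a < 2 ^ j * (b + 1) := by rw [Nat.mul_add, mul_one]; omega
        exact Nat.lt_of_mul_lt_mul_left this
      rw [ha, hb]
      congr 1
      omega
    exact le_of_lt (lt_of_lt_of_le (revBits_lt k j x hjk hd) (revBits_ge k j y hjk hy))
  · exact Nat.sInf_le hxmem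

lemma key (k j x r1 r2 : ℕ) (h1 : r1 ≤ x) (h2 : x ≤ r2) (hr2 : r2 < 2 ^ k)
    (hd : 2 ^ j ∣ x) (hb1 : r2 < x + 2 ^ j) (hb2 : x < r1 + 2 ^ j) :
    revBits k x = sInf (revBits k '' Set.Icc r1 r2) := by
  rcases le_or_gt j k with hjk | hjk
  · exact keyAux k j x r1 r2 h1 h2 hd hb1 hb2 hjk
  · have hx0 : x = 0 := by
      have hlt : 2 ^ k < 2 ^ j := Nat.pow_lt_pow_right one_lt_two hjk
      by_contra hne
      have := Nat.le_of_dvd (Nat.pos_of_ne_zero hne) hd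
      omega
    subst hx0
    have hpk : 0 < 2 ^ k := pow_pos two_pos _
    exact keyAux k k 0 r1 r2 h1 h2 (dvd_zero _) (by omega) (by omega) le_rfl

lemma loop_spec (m : ℕ) : ∀ x r1 r2, r1 ≤ r2 → 2 ^ (m + 1) ∣ x →
    r2 < x + 2 ^ (m + 1) → x < r1 + 2 ^ (m + 1) →
    ∃ j, r1 ≤ mrbLoop r1 r2 x (2 ^ m) ∧ mrbLoop r1 r2 x (2 ^ m) ≤ r2 ∧
      2 ^ j ∣ mrbLoop r1 r2 x (2 ^ m) ∧ r2 < mrbLoop r1 r2 x (2 ^ m) + 2 ^ j ∧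
      mrbLoop r1 r2 x (2 ^ m) < r1 + 2 ^ j := by
  induction m with
  | zero =>
    intro x r1 r2 h hdvd h2 h3
    rw [mrbLoop]
    by_cases hin : r1 ≤ x ∧ x ≤ r2
    · rw [if_pos hin]
      exact ⟨1, hin.1, hin.2, hdvd, h2, h3⟩
    · have hs : (2 : ℕ) ^ 0 ≠ 0 := one_ne_zero
      rw [if_neg hin, if_neg hs]
      have h2d : (2 : ℕ) ∣ x := by simpa using hdvd
      by_cases hlt : x < r1
      · rw [if_pos hlt]
        have hr : r1 = x + 1 ∧ r2 = x + 1 := by constructor <;> omega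
        have hres : mrbLoop r1 r2 (x + 2 ^ 0) (2 ^ 0 / 2) = x + 1 := by
          rw [mrbLoop]
          simp only [pow_zero]
          rw [if_pos (by omega : r1 ≤ x + 1 ∧ x + 1 ≤ r2)]
        rw [hres]
        exact ⟨0, by omega, by omega, one_dvd _, by omega, by omega⟩
      · rw [if_neg hlt]
        have hgt : r2 < x := by omega
        have hx1 : 1 ≤ x := by omega
        have hr : r1 = x - 1 ∧ r2 = x - 1 := by
          obtain ⟨a, rfl⟩ := h2d
          omega
        have hres : mrbLoop r1 r2 (x - 2 ^ 0) (2 ^ 0 / 2) = x - 1 := by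
          rw [mrbLoop]
          simp only [pow_zero]
          rw [if_pos (by omega : r1 ≤ x - 1 ∧ x - 1 ≤ r2)]
        rw [hres]
        exact ⟨0, by omega, by omega, one_dvd _, by omega, by omega⟩
  | succ n ih =>
    intro x r1 r2 h hdvd h2 h3
    rw [mrbLoop]
    by_cases hin : r1 ≤ x ∧ x ≤ r2
    · rw [if_pos hin]
      exact ⟨n + 2, hin.1, hin.2, hdvd, h2, h3⟩
    · have hs : (2 : ℕ) ^ (n + 1) ≠ 0 := (pow_pos two_pos _).ne'
      rw [if_neg hin, if_neg hs]
      have hhalf : (2 : ℕ) ^ (n + 1) / 2 = 2 ^ n := by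
        rw [pow_succ, Nat.mul_div_cancel _ two_pos]
      have hdvd' : 2 ^ (n + 1) ∣ x := dvd_trans (pow_dvd_pow 2 (by omega)) hdvd
      have hps : (2 : ℕ) ^ (n + 2) = 2 ^ (n + 1) * 2 := pow_succ 2 (n + 1)
      by_cases hlt : x < r1
      · rw [if_pos hlt, hhalf]
        apply ih (x + 2 ^ (n + 1)) r1 r2 h (Dvd.dvd.add hdvd' dvd_rfl) (by omega) (by omega)
      · rw [if_neg hlt, hhalf]
        have hgt : r2 < x := by omega
        have hx : 2 ^ (n + 1) ≤ x := le_trans (by omega : (2:ℕ)^(n+1) ≤ 2^(n+2))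
          (Nat.le_of_dvd (by omega) hdvd)
        apply ih (x - 2 ^ (n + 1)) r1 r2 h (Nat.dvd_sub hdvd' dvd_rfl) (by omega) (by omega)

/-- Correctness of the tree-descent algorithm computing `minRevBits_k(r₁, r₂)`:
starting from `x = 0` with step `s = 2^{k−1}`, it terminates at some `x ∈ [r₁, r₂]` with
`revBits_k(x) = min revBits_k([r₁, r₂])`. -/
theorem minRevBits_correct (k r1 r2 : ℕ) (h1 : r1 ≤ r2) (h2 : r2 < 2 ^ k) :
    r1 ≤ mrbLoop r1 r2 0 (2 ^ (k - 1)) ∧ mrbLoop r1 r2 0 (2 ^ (k - 1)) ≤ r2 ∧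
    revBits k (mrbLoop r1 r2 0 (2 ^ (k - 1))) = sInf (revBits k '' Set.Icc r1 r2) := by
  have hb : r2 < 0 + 2 ^ (k - 1 + 1) := by
    have : (2 : ℕ) ^ k ≤ 2 ^ (k - 1 + 1) := Nat.pow_le_pow_right two_pos (by omega)
    omega
  obtain ⟨j, ha1, ha2, ha3, ha4, ha5⟩ := loop_spec (k - 1) 0 r1 r2 h1 (dvd_zero _) hb
    (by have : 0 < 2 ^ (k - 1 + 1) := pow_pos two_pos _; omega)
  exact ⟨ha1, ha2, key k j _ r1 r2 ha1 ha2 h2 ha3 ha4 ha5⟩
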